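/- arXiv:1007.4238 — 2 statements merged into one kernel-verified Lean document; each statement's English description precedes it below -/
import Mathlib

section
/- Let X be an ergodic Banach space, let π be an action of ℍ on X by linear isometric automorphisms, and let f : ℍ → X be a 1-cocycle for π that is Lipschitz with respect to d_W. Then lim_{N→∞} ‖f(c^{N²})‖ / N = 0, where c = aba⁻¹b⁻¹; consequently liminf_{t→∞} ω_f(t)/t = 0. -/
open scoped BigOperators

/-- The discrete Heisenberg group `ℍ`, realized via the coordinates of the
3×3 upper-triangular integer matrices `[[1, x, z], [0, 1, y], [0, 0, 1]]`
with unit diagonal. -/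
@[ext] structure Heis where
  x : ℤ
  y : ℤ
  z : ℤ

namespace Heis

instance : One Heis := ⟨⟨0, 0, 0⟩⟩
instance : Mul Heis := ⟨fun g h => ⟨g.x + h.x, g.y + h.y, g.z + h.z + g.x * h.y⟩⟩
instance : Inv Heis := ⟨fun g => ⟨-g.x, -g.y, -g.z + g.x * g.y⟩⟩

@[simp] lemma mul_def (g h : Heis) :
    g * h = ⟨g.x + h.x, g.y + h.y, g.z + h.z + g.x * h.y⟩ := rfl
@[simp] lemma one_def : (1 : Heis) = ⟨0, 0, 0⟩ := rfl
@[simp] lemma inv_def (g : Heis) : g⁻¹ = ⟨-g.x, -g.y, -g.z + g.x * g.y⟩ := rfl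

instance : Group Heis where
  mul_assoc g h k := by ext <;> simp <;> ring
  one_mul g := by ext <;> simp
  mul_one g := by ext <;> simp
  inv_mul_cancel g := by ext <;> simp <;> ring

/-- The generator `a`. -/
def A : Heis := ⟨1, 0, 0⟩
/-- The generator `b`. -/
def B : Heis := ⟨0, 1, 0⟩
/-- The commutator `c = a * b * a⁻¹ * b⁻¹`, a central element. -/
def C : Heis := A * B * A⁻¹ * B⁻¹
/-- The symmetric generating set `S = {a, b, a⁻¹, b⁻¹}`. -/
def S : Set Heis := {A, B, A⁻¹, B⁻¹}

/-- The word length of `g` with respect to the generating set `S`. -/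
noncomputable def wordLength (g : Heis) : ℕ :=
  sInf {n : ℕ | ∃ l : List Heis, l.length = n ∧ (∀ s ∈ l, s ∈ S) ∧ l.prod = g}

/-- The left-invariant word metric `d_W` on `ℍ` associated to `S`. -/
noncomputable def dW (g h : Heis) : ℕ := wordLength (g⁻¹ * h)

end Heis

namespace Heis

lemma C_eq : C = ⟨0, 0, 1⟩ := by ext <;> simp [C, A, B] <;> ring

lemma A_pow (n : ℕ) : A ^ n = ⟨n, 0, 0⟩ := by
  induction n with
  | zero => simp
  | succ k ih => rw [pow_succ, ih]; ext <;> simp [A]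

lemma B_pow (n : ℕ) : B ^ n = ⟨0, n, 0⟩ := by
  induction n with
  | zero => simp
  | succ k ih => rw [pow_succ, ih]; ext <;> simp [B]

lemma C_pow (n : ℕ) : C ^ n = ⟨0, 0, n⟩ := by
  induction n with
  | zero => simp
  | succ k ih => rw [pow_succ, ih, C_eq]; ext <;> simp

lemma mem_S_A : A ∈ S := by left; rfl
lemma mem_S_B : B ∈ S := by right; left; rfl
lemma mem_S_Ainv : A⁻¹ ∈ S := by right; right; left; rfl
lemma mem_S_Binv : B⁻¹ ∈ S := by right; right; right; exact rfl

/-- generator coordinate bounds -/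
lemma S_bounds {s : Heis} (hs : s ∈ S) : |s.x| ≤ 1 ∧ |s.y| ≤ 1 ∧ s.z = 0 := by
  rcases hs with h | h | h | h <;> subst h <;> simp [A, B]

/-- word implies coordinate bounds -/
lemma word_bounds (l : List Heis) (hl : ∀ s ∈ l, s ∈ S) :
    |l.prod.x| ≤ (l.length : ℤ) ∧ |l.prod.y| ≤ (l.length : ℤ) ∧
      |l.prod.z| ≤ (l.length : ℤ) ^ 2 := by
  induction l with
  | nil => simp
  | cons s t ih =>
    obtain ⟨hx, hy, hz⟩ := ih (fun u hu => hl u (List.mem_cons_of_mem _ hu))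
    obtain ⟨hsx, hsy, hsz⟩ := S_bounds (hl s (List.mem_cons_self))
    have hprod : (s :: t).prod = s * t.prod := List.prod_cons
    rw [hprod]
    simp only [mul_def, List.length_cons]
    push_cast
    refine ⟨?_, ?_, ?_⟩
    · calc |s.x + t.prod.x| ≤ |s.x| + |t.prod.x| := abs_add_le _ _
        _ ≤ 1 + t.length := by gcongr
        _ = (t.length : ℤ) + 1 := by ring
    · calc |s.y + t.prod.y| ≤ |s.y| + |t.prod.y| := abs_add_le _ _
        _ ≤ 1 + t.length := by gcongr
        _ = (t.length : ℤ) + 1 := by ring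
    · have h1 : |s.z + t.prod.z + s.x * t.prod.y| ≤ |s.z| + |t.prod.z| + |s.x| * |t.prod.y| := by
        calc |s.z + t.prod.z + s.x * t.prod.y| ≤ |s.z + t.prod.z| + |s.x * t.prod.y| := abs_add_le _ _
          _ ≤ |s.z| + |t.prod.z| + |s.x * t.prod.y| := by gcongr; exact abs_add_le _ _
          _ = |s.z| + |t.prod.z| + |s.x| * |t.prod.y| := by rw [abs_mul]
      calc |s.z + t.prod.z + s.x * t.prod.y| ≤ |s.z| + |t.prod.z| + |s.x| * |t.prod.y| := h1
        _ ≤ 0 + (t.length : ℤ)^2 + 1 * (t.length : ℤ) := by rw [hsz]; gcongr; simp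
        _ ≤ ((t.length : ℤ) + 1)^2 := by nlinarith [Int.natCast_nonneg t.length]


lemma prod_C_word : ([A, B, A⁻¹, B⁻¹] : List Heis).prod = C := by
  show A * (B * (A⁻¹ * (B⁻¹ * 1))) = C
  rw [C]
  group

lemma prod_Cinv_word : ([B, A, B⁻¹, A⁻¹] : List Heis).prod = C⁻¹ := by
  show B * (A * (B⁻¹ * (A⁻¹ * 1))) = C⁻¹
  rw [C, A, B]
  ext <;> simp <;> ring

lemma exists_word_C_pow (r : ℕ) :
    ∃ l : List Heis, l.length = 4 * r ∧ (∀ s ∈ l, s ∈ S) ∧ l.prod = C ^ r := by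
  induction r with
  | zero => exact ⟨[], by simp⟩
  | succ k ih =>
    obtain ⟨l, hlen, hS, hprod⟩ := ih
    refine ⟨[A, B, A⁻¹, B⁻¹] ++ l, by simp [hlen]; ring, ?_, ?_⟩
    · intro s hs
      rcases List.mem_append.1 hs with h | h
      · fin_cases h
        exacts [mem_S_A, mem_S_B, mem_S_Ainv, mem_S_Binv]
      · exact hS s h
    · rw [List.prod_append, hprod, prod_C_word, pow_succ']

/-- replicate words -/
lemma replicate_word (s : Heis) (hs : s ∈ S) (n : ℕ) :
    ∃ l : List Heis, l.length = n ∧ (∀ u ∈ l, u ∈ S) ∧ l.prod = s ^ n :=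
  ⟨List.replicate n s, by simp, fun u hu => (List.eq_of_mem_replicate hu) ▸ hs,
    List.prod_replicate n s⟩

lemma exists_word_center (n : ℕ) :
    ∃ l : List Heis, (∀ s ∈ l, s ∈ S) ∧ l.prod = (⟨0, 0, (n : ℤ)⟩ : Heis) ∧
      l.length ≤ 8 * (Nat.sqrt n + 1) := by
  set k : ℕ := Nat.sqrt n + 1 with hk
  have hkpos : 0 < k := Nat.succ_pos _
  set q : ℕ := n / k with hq
  set r : ℕ := n % k with hr
  have hnlt : n < k * k := by
    have := Nat.lt_succ_sqrt n
    simpa [hk, Nat.succ_eq_add_one] using this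
  have hqk : q ≤ k := le_of_lt ((Nat.div_lt_iff_lt_mul hkpos).2 hnlt)
  have hrk : r < k := Nat.mod_lt _ hkpos
  have hn : k * q + r = n := Nat.div_add_mod n k
  obtain ⟨lA, hlA⟩ := replicate_word A mem_S_A k
  obtain ⟨lB, hlB⟩ := replicate_word B mem_S_B q
  obtain ⟨lA', hlA'⟩ := replicate_word A⁻¹ mem_S_Ainv k
  obtain ⟨lB', hlB'⟩ := replicate_word B⁻¹ mem_S_Binv q
  obtain ⟨lc, hlc⟩ := exists_word_C_pow r
  refine ⟨lA ++ lB ++ lA' ++ lB' ++ lc, ?_, ?_, ?_⟩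
  · intro s hs
    simp only [List.mem_append] at hs
    rcases hs with ((((h | h) | h) | h) | h)
    exacts [hlA.2.1 s h, hlB.2.1 s h, hlA'.2.1 s h, hlB'.2.1 s h, hlc.2.1 s h]
  · rw [List.prod_append, List.prod_append, List.prod_append, List.prod_append,
      hlA.2.2, hlB.2.2, hlA'.2.2, hlB'.2.2, hlc.2.2]
    rw [inv_pow, inv_pow, A_pow, B_pow, C_pow]
    ext <;> simp <;> push_cast [← hn] <;> ring
  · simp only [List.length_append, hlA.1, hlB.1, hlA'.1, hlB'.1, hlc.1]
    omega

lemma exists_word_center_neg (n : ℕ) :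
    ∃ l : List Heis, (∀ s ∈ l, s ∈ S) ∧ l.prod = (⟨0, 0, -(n : ℤ)⟩ : Heis) ∧
      l.length ≤ 8 * (Nat.sqrt n + 1) := by
  obtain ⟨l, hS, hprod, hlen⟩ := exists_word_center n
  refine ⟨(l.map Inv.inv).reverse, ?_, ?_, by simpa using hlen⟩
  · intro s hs
    simp only [List.mem_reverse, List.mem_map] at hs
    obtain ⟨u, hu, rfl⟩ := hs
    rcases hS u hu with h | h | h | h <;> subst h
    exacts [mem_S_Ainv, mem_S_Binv, by simpa using mem_S_A, by simpa using mem_S_B]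
  · rw [← List.prod_inv_reverse, hprod]
    ext <;> simp

lemma wordLength_le (g : Heis) (l : List Heis) (hS : ∀ s ∈ l, s ∈ S) (hprod : l.prod = g) :
    wordLength g ≤ l.length :=
  Nat.sInf_le ⟨l, rfl, hS, hprod⟩

lemma wordLength_center_le (m : ℤ) :
    wordLength ⟨0, 0, m⟩ ≤ 8 * (Nat.sqrt m.natAbs + 1) := by
  rcases le_or_gt 0 m with h | h
  · obtain ⟨l, hS, hprod, hlen⟩ := exists_word_center m.natAbs
    refine le_trans (wordLength_le _ l hS ?_) hlen
    rw [hprod]; congr 1; omega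
  · obtain ⟨l, hS, hprod, hlen⟩ := exists_word_center_neg m.natAbs
    refine le_trans (wordLength_le _ l hS ?_) hlen
    rw [hprod]; congr 1; omega

lemma wordLength_sq_lower (N : ℕ) :
    (N : ℕ) ≤ wordLength ⟨0, 0, (N : ℤ) ^ 2⟩ := by
  have hne : (⟨0, 0, (N : ℤ) ^ 2⟩ : Heis) = ⟨0, 0, ((N ^ 2 : ℕ) : ℤ)⟩ := by push_cast; rfl
  have hnonempty : {n : ℕ | ∃ l : List Heis, l.length = n ∧ (∀ s ∈ l, s ∈ S) ∧
      l.prod = (⟨0, 0, (N : ℤ) ^ 2⟩ : Heis)}.Nonempty := by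
    obtain ⟨l, hS, hprod, -⟩ := exists_word_center (N ^ 2)
    exact ⟨l.length, l, rfl, hS, by rw [hprod, hne]⟩
  obtain ⟨l, hlen, hS, hprod⟩ := Nat.sInf_mem hnonempty
  obtain ⟨-, -, hz⟩ := word_bounds l hS
  rw [hprod] at hz
  simp only at hz
  rw [abs_of_nonneg (by positivity)] at hz
  have : (N : ℤ) ≤ (l.length : ℤ) := by nlinarith [Int.natCast_nonneg l.length, Int.natCast_nonneg N]
  unfold wordLength
  rw [← hlen]
  exact_mod_cast this


/-- commutation identities -/
lemma comm_CA (n : ℕ) : C * A ^ n = A ^ n * C := by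
  rw [A_pow, C_eq]; ext <;> simp

lemma comm_CB (n : ℕ) : C * B ^ n = B ^ n * C := by
  rw [B_pow, C_eq]; ext <;> simp

lemma comm_BA (n : ℕ) : B * A ^ n = A ^ n * (⟨0, 1, -(n : ℤ)⟩ : Heis) := by
  rw [A_pow, B]; ext <;> simp

lemma comm_AB (n : ℕ) : A * B ^ n = B ^ n * (⟨1, 0, (n : ℤ)⟩ : Heis) := by
  rw [B_pow, A]; ext <;> simp

lemma commutator_eq (n : ℕ) : A ^ n * B ^ n * (A ^ n)⁻¹ * (B ^ n)⁻¹ = C ^ (n ^ 2) := by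
  rw [A_pow, B_pow, C_pow]; ext <;> simp <;> push_cast <;> ring

lemma commutator_eq' (n : ℕ) : A ^ n * B ^ n * (A ^ n)⁻¹ = C ^ (n ^ 2) * B ^ n := by
  rw [A_pow, B_pow, C_pow]; ext <;> simp <;> push_cast <;> ring

end Heis

/-- The compression rate `ω_f(t) = inf { ‖f x − f y‖ : d_W(x,y) ≥ t }` of `f : ℍ → X`. -/
noncomputable def omegaComp {X : Type*} [NormedAddCommGroup X] (f : Heis → X) (t : ℝ) : ℝ :=
  sInf {r : ℝ | ∃ g h : Heis, t ≤ (Heis.dW g h : ℝ) ∧ r = ‖f g - f h‖}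

/-- A Banach space `X` is ergodic if for every linear isometry `T : X → X` and every
`x ∈ X` the sequence of ergodic averages `(1/n)·∑_{j=0}^{n−1} T^j x` converges in norm. -/
def IsErgodicSpace (X : Type*) [NormedAddCommGroup X] [NormedSpace ℝ X] : Prop :=
  ∀ T : X →ₗᵢ[ℝ] X, ∀ v : X, ∃ w : X,
    Filter.Tendsto (fun n : ℕ => (n : ℝ)⁻¹ • ∑ j ∈ Finset.range n, (⇑T)^[j] v)
      Filter.atTop (nhds w)

open Filter Heis

section CocycleLemmas

variable {X : Type*} [NormedAddCommGroup X] [NormedSpace ℝ X]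
variable (π : Heis →* (X ≃ₗᵢ[ℝ] X)) (f : Heis → X)

lemma pi_mul_apply (g h : Heis) (v : X) : π (g * h) v = π g (π h v) := by
  rw [map_mul]; rfl

lemma f_one (hco : ∀ g h : Heis, f (g * h) = π g (f h) + f g) : f 1 = 0 := by
  have h := hco 1 1
  rw [one_mul, map_one] at h
  have h' : f 1 = f 1 + f 1 := by simpa using h
  exact right_eq_add.mp h'

lemma f_inv (hco : ∀ g h : Heis, f (g * h) = π g (f h) + f g) (g : Heis) :
    f g⁻¹ = -(π g⁻¹ (f g)) := by
  have h := hco g⁻¹ g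
  rw [inv_mul_cancel, f_one π f hco] at h
  exact (neg_eq_of_add_eq_zero_right h.symm).symm

lemma f_pow_sum (hco : ∀ g h : Heis, f (g * h) = π g (f h) + f g) (g : Heis) (n : ℕ) :
    (∑ j ∈ Finset.range n, (⇑((π g).toLinearIsometry))^[j] (f g)) = f (g ^ n) := by
  induction n with
  | zero => rw [Finset.sum_range_zero, pow_zero, f_one π f hco]
  | succ k ih =>
    rw [Finset.sum_range_succ', pow_succ', hco g (g ^ k), ← ih, map_sum]
    simp [Function.iterate_succ_apply']

lemma pi_fixed (hco : ∀ g h : Heis, f (g * h) = π g (f h) + f g)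
    (g h : Heis) (e : ℕ → Heis)
    (he : ∀ n : ℕ, h * g ^ n = g ^ n * e n)
    (hb : Tendsto (fun n : ℕ => (n : ℝ)⁻¹ * ‖f (e n)‖) atTop (nhds 0))
    {w : X} (hw : Tendsto (fun n : ℕ => (n : ℝ)⁻¹ • f (g ^ n)) atTop (nhds w)) :
    π h w = w := by
  have h1 : Tendsto (fun n : ℕ => π h ((n : ℝ)⁻¹ • f (g ^ n))) atTop (nhds (π h w)) :=
    ((π h).continuous.tendsto w).comp hw
  have h2 : ∀ n : ℕ, π h ((n : ℝ)⁻¹ • f (g ^ n)) =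
      (n : ℝ)⁻¹ • f (g ^ n) + (n : ℝ)⁻¹ • (π (g ^ n) (f (e n)) - f h) := by
    intro n
    have hc1 : f (h * g ^ n) = π h (f (g ^ n)) + f h := hco h _
    rw [he n, hco (g ^ n) (e n)] at hc1
    have h3 : π h (f (g ^ n)) = π (g ^ n) (f (e n)) + f (g ^ n) - f h :=
      eq_sub_of_add_eq hc1.symm
    rw [map_smul, h3, ← smul_add]
    congr 1
    abel
  have htail : Tendsto (fun n : ℕ => (n : ℝ)⁻¹ • (π (g ^ n) (f (e n)) - f h)) atTop (nhds 0) := by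
    apply squeeze_zero_norm (a := fun n : ℕ => (n : ℝ)⁻¹ * ‖f (e n)‖ + (n : ℝ)⁻¹ * ‖f h‖)
    · intro n
      rw [norm_smul, Real.norm_eq_abs, abs_of_nonneg (by positivity : (0:ℝ) ≤ (n : ℝ)⁻¹)]
      calc (n : ℝ)⁻¹ * ‖π (g ^ n) (f (e n)) - f h‖
          ≤ (n : ℝ)⁻¹ * (‖π (g ^ n) (f (e n))‖ + ‖f h‖) := by
            gcongr; exact norm_sub_le _ _
        _ = (n : ℝ)⁻¹ * ‖f (e n)‖ + (n : ℝ)⁻¹ * ‖f h‖ := by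
            rw [LinearIsometryEquiv.norm_map]; ring
    · have h4 : Tendsto (fun n : ℕ => (n : ℝ)⁻¹ * ‖f h‖) atTop (nhds 0) := by
        have := tendsto_one_div_atTop_nhds_zero_nat.mul_const ‖f h‖
        simpa [one_div] using this
      simpa using hb.add h4
  have h5 : Tendsto (fun n : ℕ => ((n : ℝ)⁻¹ • f (g ^ n) +
      (n : ℝ)⁻¹ • (π (g ^ n) (f (e n)) - f h)) - (n : ℝ)⁻¹ • (π (g ^ n) (f (e n)) - f h))
      atTop (nhds (π h w - 0)) := (h1.congr h2).sub htail
  rw [sub_zero] at h5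
  have h6 : Tendsto (fun n : ℕ => (n : ℝ)⁻¹ • f (g ^ n)) atTop (nhds (π h w)) := by
    convert h5 using 2 with n
    abel
  exact tendsto_nhds_unique h6 hw

lemma pi_pow_fixed (g : Heis) (w : X) (hg : π g w = w) (k : ℕ) : π (g ^ k) w = w := by
  induction k with
  | zero => rw [pow_zero, map_one]; rfl
  | succ m ih => rw [pow_succ, pi_mul_apply, hg, ih]

lemma f_commutator (hco : ∀ g h : Heis, f (g * h) = π g (f h) + f g) (u v : Heis) :
    f (u * v * u⁻¹ * v⁻¹) =
      f u + π u (f v) - π (u * v * u⁻¹) (f u) - π (u * v * u⁻¹ * v⁻¹) (f v) := by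
  have e1 : f (u * v * u⁻¹ * v⁻¹) = π (u * v * u⁻¹) (f v⁻¹) + f (u * v * u⁻¹) := hco _ _
  have e2 : f (u * v * u⁻¹) = π (u * v) (f u⁻¹) + f (u * v) := hco _ _
  have e3 : f (u * v) = π u (f v) + f u := hco _ _
  rw [e1, e2, e3, f_inv π f hco u, f_inv π f hco v, map_neg, map_neg,
    ← pi_mul_apply, ← pi_mul_apply]
  abel

end CocycleLemmas

lemma tendsto_sqrt_div_atTop : Tendsto (fun n : ℕ => ((Nat.sqrt n : ℝ)) / n) atTop (nhds 0) := by
  have hsq : Tendsto (fun n : ℕ => Nat.sqrt n) atTop atTop := by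
    apply Filter.tendsto_atTop_atTop.2
    intro b
    exact ⟨b ^ 2, fun n hn => by
      have := Nat.sqrt_le_sqrt hn
      rwa [Nat.sqrt_eq'] at this⟩
  have h1 : Tendsto (fun n : ℕ => 1 / ((Nat.sqrt n : ℝ))) atTop (nhds 0) :=
    tendsto_one_div_atTop_nhds_zero_nat.comp hsq
  apply squeeze_zero' (g := fun n : ℕ => 1 / ((Nat.sqrt n : ℝ)))
  · exact Filter.Eventually.of_forall fun n => by positivity
  · filter_upwards [Filter.eventually_ge_atTop 1] with n hn
    have hs : 1 ≤ Nat.sqrt n := by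
      have := Nat.sqrt_le_sqrt hn
      simpa using this
    rw [div_le_div_iff₀ (by exact_mod_cast Nat.pos_of_ne_zero (by omega)) (by exact_mod_cast hs)]
    have h2 : ((Nat.sqrt n : ℝ)) * (Nat.sqrt n) ≤ (n : ℝ) := by exact_mod_cast Nat.sqrt_le n
    linarith
  · exact h1

/-- **Section 2.** If `X` is an ergodic Banach space, `π` an action of `ℍ` on `X` by linear
isometric automorphisms and `f : ℍ → X` a Lipschitz `1`-cocycle for `π`, then
`‖f(c^{N²})‖/N → 0`, and consequently `liminf_{t→∞} ω_f(t)/t = 0`. -/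
theorem heisenberg_cocycle_sublinear
    (X : Type*) [NormedAddCommGroup X] [NormedSpace ℝ X] [CompleteSpace X]
    (hX : IsErgodicSpace X)
    (π : Heis →* (X ≃ₗᵢ[ℝ] X))
    (f : Heis → X) (hcocycle : ∀ g h : Heis, f (g * h) = π g (f h) + f g)
    (hLip : ∃ L : ℝ, ∀ g h : Heis, ‖f g - f h‖ ≤ L * (Heis.dW g h : ℝ)) :
    Filter.Tendsto (fun N : ℕ => ‖f (Heis.C ^ (N ^ 2))‖ / (N : ℝ))
      Filter.atTop (nhds 0) ∧
    Filter.liminf (fun t : ℝ => omegaComp f t / t) Filter.atTop = 0 := by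
  classical
  obtain ⟨L, hLip⟩ := hLip
  set M : ℝ := |L| with hMdef
  have hM0 : 0 ≤ M := abs_nonneg L
  have hMle : ∀ g h : Heis, ‖f g - f h‖ ≤ M * (Heis.dW g h : ℝ) := fun g h =>
    (hLip g h).trans (mul_le_mul_of_nonneg_right (le_abs_self L) (Nat.cast_nonneg _))
  have hone : f 1 = 0 := f_one π f hcocycle
  -- norm bound via explicit words
  have hnorm : ∀ (g : Heis) (l : List Heis), (∀ s ∈ l, s ∈ Heis.S) → l.prod = g →
      ‖f g‖ ≤ M * l.length := by
    intro g l hS hp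
    have h1 := hMle 1 g
    rw [hone, zero_sub, norm_neg] at h1
    have h2 : Heis.dW 1 g ≤ l.length := by
      have hdw : Heis.dW 1 g = Heis.wordLength g := by rw [Heis.dW, inv_one, one_mul]
      rw [hdw]; exact Heis.wordLength_le g l hS hp
    calc ‖f g‖ ≤ M * (Heis.dW 1 g : ℝ) := h1
      _ ≤ M * l.length := by gcongr <;> exact_mod_cast h2
  have hcenterB : ∀ n : ℕ,
      ‖f (⟨0, 1, -(n : ℤ)⟩ : Heis)‖ ≤ M * (8 * ((Nat.sqrt n : ℝ) + 1) + 1) := by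
    intro n
    obtain ⟨l, hS, hp, hlen⟩ := Heis.exists_word_center_neg n
    have hS' : ∀ s ∈ l ++ [Heis.B], s ∈ Heis.S := by
      intro s hs
      rcases List.mem_append.1 hs with h | h
      · exact hS s h
      · rw [List.mem_singleton] at h; subst h; exact Heis.mem_S_B
    have hp' : (l ++ [Heis.B]).prod = (⟨0, 1, -(n : ℤ)⟩ : Heis) := by
      rw [List.prod_append, hp, List.prod_singleton]
      ext <;> simp [Heis.B]
    have h := hnorm _ _ hS' hp'
    have hx : (((l ++ [Heis.B]).length : ℕ) : ℝ) ≤ 8 * ((Nat.sqrt n : ℝ) + 1) + 1 := by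
      have h' : (l.length : ℝ) ≤ 8 * ((Nat.sqrt n : ℝ) + 1) := by exact_mod_cast hlen
      simp only [List.length_append, List.length_singleton]
      push_cast
      linarith
    exact h.trans (mul_le_mul_of_nonneg_left hx hM0)
  have hcenterA : ∀ n : ℕ,
      ‖f (⟨1, 0, (n : ℤ)⟩ : Heis)‖ ≤ M * (8 * ((Nat.sqrt n : ℝ) + 1) + 1) := by
    intro n
    obtain ⟨l, hS, hp, hlen⟩ := Heis.exists_word_center n
    have hS' : ∀ s ∈ l ++ [Heis.A], s ∈ Heis.S := by
      intro s hs
      rcases List.mem_append.1 hs with h | h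
      · exact hS s h
      · rw [List.mem_singleton] at h; subst h; exact Heis.mem_S_A
    have hp' : (l ++ [Heis.A]).prod = (⟨1, 0, (n : ℤ)⟩ : Heis) := by
      rw [List.prod_append, hp, List.prod_singleton]
      ext <;> simp [Heis.A]
    have h := hnorm _ _ hS' hp'
    have hx : (((l ++ [Heis.A]).length : ℕ) : ℝ) ≤ 8 * ((Nat.sqrt n : ℝ) + 1) + 1 := by
      have h' : (l.length : ℝ) ≤ 8 * ((Nat.sqrt n : ℝ) + 1) := by exact_mod_cast hlen
      simp only [List.length_append, List.length_singleton]
      push_cast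
      linarith
    exact h.trans (mul_le_mul_of_nonneg_left hx hM0)
  -- the sublinear bound tends to zero after division by n
  have hbound0 : Tendsto (fun n : ℕ => (n : ℝ)⁻¹ * (M * (8 * ((Nat.sqrt n : ℝ) + 1) + 1)))
      atTop (nhds 0) := by
    have h1 := tendsto_sqrt_div_atTop.const_mul (8 * M)
    have h2 := tendsto_one_div_atTop_nhds_zero_nat.const_mul (9 * M)
    have h3 := h1.add h2
    simp only [mul_zero, add_zero] at h3
    apply h3.congr
    intro n
    field_simp
    ring
  -- ergodic limits
  obtain ⟨wa, hwa0⟩ := hX ((π Heis.A).toLinearIsometry) (f Heis.A)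
  have hwa : Tendsto (fun n : ℕ => (n : ℝ)⁻¹ • f (Heis.A ^ n)) atTop (nhds wa) :=
    hwa0.congr fun n => by rw [f_pow_sum π f hcocycle]
  obtain ⟨wb, hwb0⟩ := hX ((π Heis.B).toLinearIsometry) (f Heis.B)
  have hwb : Tendsto (fun n : ℕ => (n : ℝ)⁻¹ • f (Heis.B ^ n)) atTop (nhds wb) :=
    hwb0.congr fun n => by rw [f_pow_sum π f hcocycle]
  -- invariance of the ergodic limits
  have hconst : ∀ g : Heis, Tendsto (fun n : ℕ => (n : ℝ)⁻¹ * ‖f g‖) atTop (nhds 0) := by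
    intro g
    have := tendsto_one_div_atTop_nhds_zero_nat.mul_const ‖f g‖
    simpa [one_div] using this
  have hCwa : π Heis.C wa = wa :=
    pi_fixed π f hcocycle Heis.A Heis.C (fun _ => Heis.C) Heis.comm_CA (hconst Heis.C) hwa
  have hCwb : π Heis.C wb = wb :=
    pi_fixed π f hcocycle Heis.B Heis.C (fun _ => Heis.C) Heis.comm_CB (hconst Heis.C) hwb
  have hBwa : π Heis.B wa = wa := by
    refine pi_fixed π f hcocycle Heis.A Heis.B (fun n => (⟨0, 1, -(n : ℤ)⟩ : Heis))
      Heis.comm_BA ?_ hwa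
    refine squeeze_zero' (Filter.Eventually.of_forall fun n => by positivity)
      (Filter.Eventually.of_forall fun n => ?_) hbound0
    exact mul_le_mul_of_nonneg_left (hcenterB n) (by positivity)
  have hAwb : π Heis.A wb = wb := by
    refine pi_fixed π f hcocycle Heis.B Heis.A (fun n => (⟨1, 0, (n : ℤ)⟩ : Heis))
      Heis.comm_AB ?_ hwb
    refine squeeze_zero' (Filter.Eventually.of_forall fun n => by positivity)
      (Filter.Eventually.of_forall fun n => ?_) hbound0
    exact mul_le_mul_of_nonneg_left (hcenterA n) (by positivity)
  -- the main limit
  have main : Tendsto (fun n : ℕ => (n : ℝ)⁻¹ • f (Heis.C ^ (n ^ 2))) atTop (nhds 0) := by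
    apply squeeze_zero_norm (a := fun n : ℕ => 2 * ‖(n : ℝ)⁻¹ • f (Heis.A ^ n) - wa‖ +
      2 * ‖(n : ℝ)⁻¹ • f (Heis.B ^ n) - wb‖)
    · intro n
      have hfid : f (Heis.C ^ (n ^ 2)) = f (Heis.A ^ n) + π (Heis.A ^ n) (f (Heis.B ^ n))
          - π (Heis.C ^ (n ^ 2)) (π (Heis.B ^ n) (f (Heis.A ^ n)))
          - π (Heis.C ^ (n ^ 2)) (f (Heis.B ^ n)) := by
        have h := f_commutator π f hcocycle (Heis.A ^ n) (Heis.B ^ n)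
        rw [Heis.commutator_eq, Heis.commutator_eq'] at h
        rw [h, pi_mul_apply]
      have h1 : π (Heis.A ^ n) wb = wb := pi_pow_fixed π Heis.A wb hAwb n
      have h2 : π (Heis.B ^ n) wa = wa := pi_pow_fixed π Heis.B wa hBwa n
      have h3 : π (Heis.C ^ (n ^ 2)) wa = wa := pi_pow_fixed π Heis.C wa hCwa (n ^ 2)
      have h4 : π (Heis.C ^ (n ^ 2)) wb = wb := pi_pow_fixed π Heis.C wb hCwb (n ^ 2)
      have hdecomp : (n : ℝ)⁻¹ • f (Heis.C ^ (n ^ 2)) =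
          ((n : ℝ)⁻¹ • f (Heis.A ^ n) - wa)
          + π (Heis.A ^ n) ((n : ℝ)⁻¹ • f (Heis.B ^ n) - wb)
          - π (Heis.C ^ (n ^ 2)) (π (Heis.B ^ n) ((n : ℝ)⁻¹ • f (Heis.A ^ n) - wa))
          - π (Heis.C ^ (n ^ 2)) ((n : ℝ)⁻¹ • f (Heis.B ^ n) - wb) := by
        rw [hfid]
        simp only [smul_sub, smul_add, map_sub, map_smul, h1, h2, h3, h4]
        abel
      rw [hdecomp]
      have e2 : ‖π (Heis.A ^ n) ((n : ℝ)⁻¹ • f (Heis.B ^ n) - wb)‖ =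
          ‖(n : ℝ)⁻¹ • f (Heis.B ^ n) - wb‖ := (π _).norm_map _
      have e3 : ‖π (Heis.C ^ (n ^ 2)) (π (Heis.B ^ n) ((n : ℝ)⁻¹ • f (Heis.A ^ n) - wa))‖ =
          ‖(n : ℝ)⁻¹ • f (Heis.A ^ n) - wa‖ := by
        rw [(π _).norm_map, (π _).norm_map]
      have e4 : ‖π (Heis.C ^ (n ^ 2)) ((n : ℝ)⁻¹ • f (Heis.B ^ n) - wb)‖ =
          ‖(n : ℝ)⁻¹ • f (Heis.B ^ n) - wb‖ := (π _).norm_map _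
      calc ‖((n : ℝ)⁻¹ • f (Heis.A ^ n) - wa)
          + π (Heis.A ^ n) ((n : ℝ)⁻¹ • f (Heis.B ^ n) - wb)
          - π (Heis.C ^ (n ^ 2)) (π (Heis.B ^ n) ((n : ℝ)⁻¹ • f (Heis.A ^ n) - wa))
          - π (Heis.C ^ (n ^ 2)) ((n : ℝ)⁻¹ • f (Heis.B ^ n) - wb)‖
          ≤ ‖((n : ℝ)⁻¹ • f (Heis.A ^ n) - wa)
            + π (Heis.A ^ n) ((n : ℝ)⁻¹ • f (Heis.B ^ n) - wb)
            - π (Heis.C ^ (n ^ 2)) (π (Heis.B ^ n) ((n : ℝ)⁻¹ • f (Heis.A ^ n) - wa))‖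
            + ‖π (Heis.C ^ (n ^ 2)) ((n : ℝ)⁻¹ • f (Heis.B ^ n) - wb)‖ := norm_sub_le _ _
        _ ≤ (‖((n : ℝ)⁻¹ • f (Heis.A ^ n) - wa)
            + π (Heis.A ^ n) ((n : ℝ)⁻¹ • f (Heis.B ^ n) - wb)‖
            + ‖π (Heis.C ^ (n ^ 2)) (π (Heis.B ^ n) ((n : ℝ)⁻¹ • f (Heis.A ^ n) - wa))‖)
            + ‖π (Heis.C ^ (n ^ 2)) ((n : ℝ)⁻¹ • f (Heis.B ^ n) - wb)‖ := by
            gcongr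
            exact norm_sub_le _ _
        _ ≤ ((‖(n : ℝ)⁻¹ • f (Heis.A ^ n) - wa‖
            + ‖π (Heis.A ^ n) ((n : ℝ)⁻¹ • f (Heis.B ^ n) - wb)‖)
            + ‖π (Heis.C ^ (n ^ 2)) (π (Heis.B ^ n) ((n : ℝ)⁻¹ • f (Heis.A ^ n) - wa))‖)
            + ‖π (Heis.C ^ (n ^ 2)) ((n : ℝ)⁻¹ • f (Heis.B ^ n) - wb)‖ := by
            gcongr
            exact norm_add_le _ _
        _ = 2 * ‖(n : ℝ)⁻¹ • f (Heis.A ^ n) - wa‖ +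
            2 * ‖(n : ℝ)⁻¹ • f (Heis.B ^ n) - wb‖ := by
            rw [e2, e3, e4]; ring
    · have pa : Tendsto (fun n : ℕ => ‖(n : ℝ)⁻¹ • f (Heis.A ^ n) - wa‖) atTop (nhds 0) := by
        simpa using (hwa.sub_const wa).norm
      have pb : Tendsto (fun n : ℕ => ‖(n : ℝ)⁻¹ • f (Heis.B ^ n) - wb‖) atTop (nhds 0) := by
        simpa using (hwb.sub_const wb).norm
      simpa using (pa.const_mul 2).add (pb.const_mul 2)
  have hpart1 : Tendsto (fun N : ℕ => ‖f (Heis.C ^ (N ^ 2))‖ / (N : ℝ)) atTop (nhds 0) := by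
    have hnorm0 : Tendsto (fun n : ℕ => ‖(n : ℝ)⁻¹ • f (Heis.C ^ (n ^ 2))‖) atTop (nhds 0) := by
      simpa using main.norm
    apply hnorm0.congr
    intro n
    rw [norm_smul, Real.norm_eq_abs, abs_of_nonneg (by positivity : (0:ℝ) ≤ (n : ℝ)⁻¹),
      inv_mul_eq_div]
  refine ⟨hpart1, ?_⟩
  -- part 2 : compression rate
  have homega_nonneg : ∀ t : ℝ, 0 ≤ omegaComp f t := by
    intro t
    apply Real.sInf_nonneg
    rintro r ⟨g, h, -, rfl⟩
    positivity
  have homega_le : ∀ t : ℝ, omegaComp f t ≤ ‖f (Heis.C ^ (Nat.ceil t ^ 2))‖ := by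
    intro t
    have hbdd : BddBelow {r : ℝ | ∃ g h : Heis, t ≤ (Heis.dW g h : ℝ) ∧ r = ‖f g - f h‖} :=
      ⟨0, by rintro r ⟨g, h, -, rfl⟩; positivity⟩
    have hmem : ‖f 1 - f (Heis.C ^ (Nat.ceil t ^ 2))‖ ∈
        {r : ℝ | ∃ g h : Heis, t ≤ (Heis.dW g h : ℝ) ∧ r = ‖f g - f h‖} := by
      refine ⟨1, Heis.C ^ (Nat.ceil t ^ 2), ?_, rfl⟩
      have h1 : Heis.dW 1 (Heis.C ^ (Nat.ceil t ^ 2)) =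
          Heis.wordLength (Heis.C ^ (Nat.ceil t ^ 2)) := by rw [Heis.dW, inv_one, one_mul]
      have h2 : (Nat.ceil t : ℕ) ≤ Heis.wordLength (Heis.C ^ (Nat.ceil t ^ 2)) := by
        have hlow := Heis.wordLength_sq_lower (Nat.ceil t)
        rw [Heis.C_pow,
          show ((Nat.ceil t ^ 2 : ℕ) : ℤ) = ((Nat.ceil t : ℕ) : ℤ) ^ 2 by push_cast; ring]
        exact hlow
      rw [h1]
      calc t ≤ (Nat.ceil t : ℝ) := Nat.le_ceil t
        _ ≤ _ := by exact_mod_cast h2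
    have h := csInf_le hbdd hmem
    rwa [hone, zero_sub, norm_neg] at h
  have hceil : Tendsto (fun t : ℝ => Nat.ceil t) atTop atTop := tendsto_nat_ceil_atTop
  have hcomp : Tendsto (fun t : ℝ => ‖f (Heis.C ^ (Nat.ceil t ^ 2))‖ / (Nat.ceil t : ℝ))
      atTop (nhds 0) := hpart1.comp hceil
  have h2c : Tendsto (fun t : ℝ => 2 * (‖f (Heis.C ^ (Nat.ceil t ^ 2))‖ / (Nat.ceil t : ℝ)))
      atTop (nhds 0) := by
    simpa using hcomp.const_mul 2
  have hfinal : Tendsto (fun t : ℝ => omegaComp f t / t) atTop (nhds 0) := by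
    apply squeeze_zero' ?_ ?_ h2c
    · filter_upwards [Filter.eventually_ge_atTop (1 : ℝ)] with t ht
      exact div_nonneg (homega_nonneg t) (by linarith)
    · filter_upwards [Filter.eventually_ge_atTop (1 : ℝ)] with t ht
      have ht0 : 0 < t := lt_of_lt_of_le zero_lt_one ht
      have hMc1 : (1 : ℝ) ≤ (Nat.ceil t : ℝ) := le_trans ht (Nat.le_ceil t)
      have hMc2t : (Nat.ceil t : ℝ) ≤ 2 * t := by
        have := Nat.ceil_lt_add_one (le_trans zero_le_one ht)
        linarith
      have h3 : omegaComp f t / t ≤ ‖f (Heis.C ^ (Nat.ceil t ^ 2))‖ / t := by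
        gcongr
        exact homega_le t
      refine h3.trans ?_
      rw [div_le_iff₀ ht0]
      calc ‖f (Heis.C ^ (Nat.ceil t ^ 2))‖ = ‖f (Heis.C ^ (Nat.ceil t ^ 2))‖ * 1 :=
          (mul_one _).symm
        _ ≤ ‖f (Heis.C ^ (Nat.ceil t ^ 2))‖ * (2 * t / (Nat.ceil t : ℝ)) := by
            gcongr
            · exact (one_le_div (by linarith : (0:ℝ) < (Nat.ceil t : ℝ))).2 hMc2t
        _ = 2 * (‖f (Heis.C ^ (Nat.ceil t ^ 2))‖ / (Nat.ceil t : ℝ)) * t := by ring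
  exact hfinal.liminf_eq
end

section
/- Let p ≥ 2, K > 0, and let (X, ‖·‖) be a Banach space satisfying the p-convexity inequality with constant K. Fix z ∈ X and a bounded linear operator T : X → X with ‖T‖ ≤ 1. For each integer n ≥ 0 set s_n := 2^{−n} ∑_{j=0}^{2^n−1} T^j z. Then for every ℓ ∈ ℕ, ∑_{i=0}^{∞} 2^{−ℓ} ∑_{j=0}^{2^ℓ−1} ‖s_{(i+1)ℓ} − T^{j·2^{iℓ}} s_{iℓ}‖^p ≤ (2K)^p ‖z‖^p. -/
open scoped BigOperators

private lemma sum_range_mul_eq {M : Type*} [AddCommMonoid M] (f : ℕ → M) (a b : ℕ) :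
    ∑ t ∈ Finset.range (a * b), f t
      = ∑ j ∈ Finset.range a, ∑ r ∈ Finset.range b, f (j * b + r) := by
  induction a with
  | zero => simp
  | succ a ih =>
    rw [Finset.sum_range_succ, ← ih, add_mul, one_mul, Finset.sum_range_add]

/-- A Banach space `(X, ‖·‖)` satisfies the `p`-convexity inequality with constant `K`:
`‖(x+y)/2‖^p ≤ (‖x‖^p + ‖y‖^p)/2 − K^{−p}·‖(x−y)/2‖^p` for all `x, y ∈ X`. -/
def PConvex (X : Type*) [NormedAddCommGroup X] [NormedSpace ℝ X] (p K : ℝ) : Prop :=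
  ∀ v w : X, ‖(2:ℝ)⁻¹ • (v + w)‖ ^ p ≤
    (‖v‖ ^ p + ‖w‖ ^ p) / 2 - K ^ (-p) * ‖(2:ℝ)⁻¹ • (v - w)‖ ^ p

/-- **Lemma 3.1 (uniform convexity and ergodic averages).** Let `p ≥ 2`, `K > 0`, and let
`(X, ‖·‖)` satisfy the `p`-convexity inequality with constant `K`. Fix `z ∈ X` and a bounded
operator `T : X → X` with `‖T‖ ≤ 1`, and set `s_n = 2^{−n}·∑_{j<2^n} T^j z`. Then for every
`ℓ ∈ ℕ`, `∑_{i=0}^∞ 2^{−ℓ}·∑_{j<2^ℓ} ‖s_{(i+1)ℓ} − T^{j·2^{iℓ}} s_{iℓ}‖^p ≤ (2K)^p·‖z‖^p`. -/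
theorem ergodic_averages_pconvex
    (X : Type*) [NormedAddCommGroup X] [NormedSpace ℝ X]
    (p K : ℝ) (hp : 2 ≤ p) (hK : 0 < K) (hX : PConvex X p K)
    (z : X) (T : X →L[ℝ] X) (hT : ‖T‖ ≤ 1)
    (s : ℕ → X) (hs : ∀ n : ℕ, s n = ((2 : ℝ) ^ n)⁻¹ • ∑ j ∈ Finset.range (2 ^ n), (T ^ j) z)
    (ℓ : ℕ) (hℓ : 1 ≤ ℓ) :
    (∑' i : ℕ, ENNReal.ofReal
        (((2 : ℝ) ^ ℓ)⁻¹ * ∑ j ∈ Finset.range (2 ^ ℓ),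
          ‖s ((i + 1) * ℓ) - (T ^ (j * 2 ^ (i * ℓ))) (s (i * ℓ))‖ ^ p)) ≤
      ENNReal.ofReal ((2 * K) ^ p * ‖z‖ ^ p) := by
  have hp1 : (1:ℝ) ≤ p := by linarith
  have hp0 : (0:ℝ) ≤ p := by linarith
  -- powers of T are nonexpansive
  have hTk : ∀ (k : ℕ) (x : X), ‖(T ^ k) x‖ ≤ ‖x‖ := by
    intro k
    induction k with
    | zero => intro x; simp
    | succ k ih =>
      intro x
      rw [pow_succ, ContinuousLinearMap.mul_apply]
      calc ‖(T ^ k) (T x)‖ ≤ ‖T x‖ := ih (T x)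
        _ ≤ ‖T‖ * ‖x‖ := T.le_opNorm x
        _ ≤ 1 * ‖x‖ := mul_le_mul_of_nonneg_right hT (norm_nonneg x)
        _ = ‖x‖ := one_mul _
  set N : ℕ := 2 ^ ℓ with hNdef
  set c : ℝ := ((2:ℝ)^ℓ)⁻¹ with hcdef
  have hcN : ((N : ℕ) : ℝ) = (2:ℝ)^ℓ := by rw [hNdef]; push_cast; ring
  have hc0 : 0 ≤ c := by positivity
  have hc1 : c * ((N:ℕ) : ℝ) = 1 := by
    rw [hcN, hcdef]; field_simp
  -- the block identity
  have hblock : ∀ i : ℕ, s ((i+1)*ℓ)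
      = c • ∑ j ∈ Finset.range N, (T ^ (j * 2^(i*ℓ))) (s (i*ℓ)) := by
    intro i
    have h1 : (2:ℕ)^((i+1)*ℓ) = N * 2^(i*ℓ) := by
      rw [hNdef, ← pow_add, add_mul, one_mul, add_comm]
    have h2 : ((2:ℝ)^((i+1)*ℓ))⁻¹ = c * ((2:ℝ)^(i*ℓ))⁻¹ := by
      have h3 : (i+1)*ℓ = ℓ + i*ℓ := by ring
      rw [h3, pow_add, mul_inv, hcdef]
    have hj : ∀ j : ℕ, (T ^ (j * 2^(i*ℓ))) (s (i*ℓ))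
        = ((2:ℝ)^(i*ℓ))⁻¹ • ∑ r ∈ Finset.range (2^(i*ℓ)), (T ^ (j * 2^(i*ℓ) + r)) z := by
      intro j
      rw [hs (i*ℓ), map_smul, map_sum]
      simp only [pow_add, ContinuousLinearMap.mul_apply]
    rw [hs ((i+1)*ℓ), h1, sum_range_mul_eq (fun t => (T ^ t) z) N (2^(i*ℓ)), h2, mul_smul]
    simp only [hj]
    rw [Finset.smul_sum]
  set A : ℕ → ℝ := fun i => ‖s (i * ℓ)‖ ^ p with hA
  have hA0 : ∀ i, 0 ≤ A i := fun i => Real.rpow_nonneg (norm_nonneg _) p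
  have hKp : (0:ℝ) < K ^ p := Real.rpow_pos_of_pos hK p
  have h2p : (0:ℝ) < (2:ℝ) ^ p := Real.rpow_pos_of_pos two_pos p
  -- the key one-block estimate
  have key : ∀ i : ℕ, c * (∑ j ∈ Finset.range N,
      ‖s ((i + 1) * ℓ) - (T ^ (j * 2 ^ (i * ℓ))) (s (i * ℓ))‖ ^ p)
      ≤ (2*K)^p * (A i - A (i+1)) := by
    intro i
    set y := s ((i+1)*ℓ) with hy
    set x : ℕ → X := fun j => (T ^ (j * 2^(i*ℓ))) (s (i*ℓ)) with hx
    set S0 : ℝ := ∑ j ∈ Finset.range N, ‖x j‖ ^ p with hS0def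
    set S1 : ℝ := ∑ j ∈ Finset.range N, ‖(2:ℝ)⁻¹ • (x j - y)‖ ^ p with hS1def
    set S2 : ℝ := ∑ j ∈ Finset.range N, ‖(2:ℝ)⁻¹ • (x j + y)‖ ^ p with hS2def
    -- averaged p-convexity
    have h1 : c * S2 + K^(-p) * (c * S1) ≤ (c * S0 + ‖y‖^p) / 2 := by
      have hsum : ∑ j ∈ Finset.range N,
          c * (‖(2:ℝ)⁻¹ • (x j + y)‖ ^ p + K^(-p) * ‖(2:ℝ)⁻¹ • (x j - y)‖ ^ p)
          ≤ ∑ j ∈ Finset.range N, c * ((‖x j‖ ^ p + ‖y‖ ^ p) / 2) := by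
        refine Finset.sum_le_sum fun j _ => mul_le_mul_of_nonneg_left ?_ hc0
        have := hX (x j) y
        linarith
      have e1 : ∑ j ∈ Finset.range N,
          c * (‖(2:ℝ)⁻¹ • (x j + y)‖ ^ p + K^(-p) * ‖(2:ℝ)⁻¹ • (x j - y)‖ ^ p)
          = c * S2 + K^(-p) * (c * S1) := by
        rw [hS1def, hS2def, Finset.mul_sum, Finset.mul_sum, Finset.mul_sum,
          ← Finset.sum_add_distrib]
        refine Finset.sum_congr rfl fun j _ => ?_
        ring
      have e2 : ∑ j ∈ Finset.range N, c * ((‖x j‖ ^ p + ‖y‖ ^ p) / 2)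
          = (c * S0 + ‖y‖^p) / 2 := by
        rw [hS0def, Finset.mul_sum]
        have : ∑ j ∈ Finset.range N, c * ((‖x j‖ ^ p + ‖y‖ ^ p) / 2)
            = (∑ j ∈ Finset.range N, c * ‖x j‖ ^ p
                + ∑ j ∈ Finset.range N, c * ‖y‖ ^ p) / 2 := by
          rw [← Finset.sum_add_distrib, Finset.sum_div]
          refine Finset.sum_congr rfl fun j _ => ?_
          ring
        rw [this, Finset.sum_const, Finset.card_range, nsmul_eq_mul, ← mul_assoc,
          mul_comm ((N:ℕ):ℝ) c, hc1, one_mul]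
      rw [e1, e2] at hsum
      exact hsum
    -- Jensen: the midpoints average back to y
    have hmid : c • ∑ j ∈ Finset.range N, (2:ℝ)⁻¹ • (x j + y) = y := by
      have h₁ : ∑ j ∈ Finset.range N, (2:ℝ)⁻¹ • (x j + y)
          = (2:ℝ)⁻¹ • ((∑ j ∈ Finset.range N, x j) + ((N:ℕ):ℝ) • y) := by
        rw [← Finset.smul_sum, Finset.sum_add_distrib, Finset.sum_const, Finset.card_range,
          Nat.cast_smul_eq_nsmul]
      rw [h₁, smul_comm, smul_add, smul_smul, hc1, one_smul, ← hblock i, ← hy,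
        ← two_smul ℝ y, smul_smul]
      norm_num
    have hJ : ‖y‖ ^ p ≤ c * S2 := by
      have h2 : ‖y‖ ≤ ∑ j ∈ Finset.range N, c * ‖(2:ℝ)⁻¹ • (x j + y)‖ := by
        conv_lhs => rw [← hmid]
        calc ‖c • ∑ j ∈ Finset.range N, (2:ℝ)⁻¹ • (x j + y)‖
            = c * ‖∑ j ∈ Finset.range N, (2:ℝ)⁻¹ • (x j + y)‖ := by
              rw [norm_smul, Real.norm_of_nonneg hc0]
          _ ≤ c * ∑ j ∈ Finset.range N, ‖(2:ℝ)⁻¹ • (x j + y)‖ :=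
              mul_le_mul_of_nonneg_left (norm_sum_le _ _) hc0
          _ = ∑ j ∈ Finset.range N, c * ‖(2:ℝ)⁻¹ • (x j + y)‖ := by rw [Finset.mul_sum]
      calc ‖y‖ ^ p ≤ (∑ j ∈ Finset.range N, c * ‖(2:ℝ)⁻¹ • (x j + y)‖) ^ p :=
            Real.rpow_le_rpow (norm_nonneg _) h2 hp0
        _ ≤ ∑ j ∈ Finset.range N, c * ‖(2:ℝ)⁻¹ • (x j + y)‖ ^ p := by
            refine Real.rpow_arith_mean_le_arith_mean_rpow (Finset.range N)
              (fun _ => c) (fun j => ‖(2:ℝ)⁻¹ • (x j + y)‖) (fun _ _ => hc0) ?_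
              (fun _ _ => norm_nonneg _) hp1
            rw [Finset.sum_const, Finset.card_range, nsmul_eq_mul, mul_comm]
            exact hc1
        _ = c * S2 := by rw [hS2def, Finset.mul_sum]
    -- the leaves are bounded by ‖s (iℓ)‖
    have hS0 : c * S0 ≤ A i := by
      have h3 : S0 ≤ ((N:ℕ):ℝ) * A i := by
        rw [hS0def]
        calc ∑ j ∈ Finset.range N, ‖x j‖ ^ p
            ≤ ∑ _j ∈ Finset.range N, A i := Finset.sum_le_sum fun j _ =>
              Real.rpow_le_rpow (norm_nonneg _) (hTk _ _) hp0
          _ = ((N:ℕ):ℝ) * A i := by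
              rw [Finset.sum_const, Finset.card_range, nsmul_eq_mul]
      calc c * S0 ≤ c * (((N:ℕ):ℝ) * A i) := by
            refine mul_le_mul_of_nonneg_left h3 hc0
        _ = A i := by rw [← mul_assoc, hc1, one_mul]
    -- rewrite the goal sum in terms of S1
    have hterm : ∀ j : ℕ, ‖s ((i + 1) * ℓ) - (T ^ (j * 2 ^ (i * ℓ))) (s (i * ℓ))‖ ^ p
        = (2:ℝ)^p * ‖(2:ℝ)⁻¹ • (x j - y)‖ ^ p := by
      intro j
      have e : ‖(2:ℝ)⁻¹ • (x j - y)‖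
          = 2⁻¹ * ‖s ((i + 1) * ℓ) - (T ^ (j * 2 ^ (i * ℓ))) (s (i * ℓ))‖ := by
        rw [norm_smul, norm_sub_rev, hy, hx]
        norm_num
      rw [e, Real.mul_rpow (by norm_num) (norm_nonneg _), ← mul_assoc,
        ← Real.mul_rpow (by norm_num : (0:ℝ) ≤ 2) (by norm_num : (0:ℝ) ≤ 2⁻¹)]
      norm_num [Real.one_rpow]
    have hgoal : c * (∑ j ∈ Finset.range N,
        ‖s ((i + 1) * ℓ) - (T ^ (j * 2 ^ (i * ℓ))) (s (i * ℓ))‖ ^ p)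
        = (2:ℝ)^p * (c * S1) := by
      rw [hS1def, Finset.mul_sum, Finset.mul_sum, Finset.mul_sum]
      refine Finset.sum_congr rfl fun j _ => ?_
      rw [hterm j]
      ring
    -- combine
    have hKinv : K ^ (-p) = (K ^ p)⁻¹ := Real.rpow_neg hK.le _
    have hAy : A (i+1) = ‖y‖ ^ p := by rw [hA, hy]
    have hmain : c * S1 ≤ K ^ p * ((A i - A (i+1)) / 2) := by
      have h4 : (K ^ p)⁻¹ * (c * S1) ≤ (A i - A (i+1)) / 2 := by
        rw [← hKinv]
        have := h1
        rw [hAy]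
        linarith [hJ, hS0]
      have := mul_le_mul_of_nonneg_left h4 hKp.le
      rwa [← mul_assoc, mul_inv_cancel₀ hKp.ne', one_mul] at this
    have hdiff : 0 ≤ A i - A (i+1) := by
      have hS1nn : 0 ≤ c * S1 := mul_nonneg hc0 (Finset.sum_nonneg fun j _ =>
        Real.rpow_nonneg (norm_nonneg _) p)
      nlinarith
    rw [hgoal, Real.mul_rpow (by norm_num) hK.le]
    calc (2:ℝ)^p * (c * S1) ≤ (2:ℝ)^p * (K ^ p * ((A i - A (i+1)) / 2)) :=
          mul_le_mul_of_nonneg_left hmain h2p.le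
      _ ≤ (2:ℝ)^p * K^p * (A i - A (i+1)) := by
          nlinarith [mul_nonneg (mul_nonneg h2p.le hKp.le) hdiff]
  -- sum up
  have hz0 : A 0 = ‖z‖ ^ p := by
    have : s 0 = z := by rw [hs]; simp
    rw [hA]; simp [this]
  refine ENNReal.tsum_le_of_sum_range_le fun n => ?_
  rw [← ENNReal.ofReal_sum_of_nonneg (fun i _ => mul_nonneg hc0 (Finset.sum_nonneg fun j _ =>
    Real.rpow_nonneg (norm_nonneg _) p))]
  apply ENNReal.ofReal_le_ofReal
  have h2Kp : (0:ℝ) ≤ (2*K)^p := Real.rpow_nonneg (by positivity) p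
  calc ∑ i ∈ Finset.range n, c * (∑ j ∈ Finset.range N,
        ‖s ((i + 1) * ℓ) - (T ^ (j * 2 ^ (i * ℓ))) (s (i * ℓ))‖ ^ p)
      ≤ ∑ i ∈ Finset.range n, (2*K)^p * (A i - A (i+1)) :=
        Finset.sum_le_sum fun i _ => key i
    _ = (2*K)^p * (A 0 - A n) := by rw [← Finset.mul_sum, Finset.sum_range_sub']
    _ ≤ (2*K)^p * A 0 := by nlinarith [hA0 n]
    _ = (2*K)^p * ‖z‖^p := by rw [hz0]
end
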